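/- Let T₁ be an n×m₁ complex matrix and T₂ an n×m₂ complex matrix, and let T = [T₁ T₂] be the n×(m₁+m₂) row block matrix. Then the operator norm of T is at most 1 if and only if there exist contractions Γ₁ (n×m₁) and Γ₂ (n×m₂) such that T₁ = Γ₁ and T₂ = D_{Γ₁ᴴ} · Γ₂, where D_{Γ₁ᴴ} = (I − Γ₁Γ₁ᴴ)^{1/2}. -/

import Mathlib

open scoped Matrix Matrix.Norms.L2Operator ComplexOrder

open Matrix

section norms
variable {n m : Type*} [Fintype n] [Fintype m] [DecidableEq n] [DecidableEq m]

private lemma dot_self_eq (x : m → ℂ) :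
    star x ⬝ᵥ x = ((‖(WithLp.equiv 2 (m → ℂ)).symm x‖ : ℝ) : ℂ) ^ 2 := by
  have := inner_self_eq_norm_sq_to_K (𝕜 := ℂ) ((WithLp.equiv 2 (m → ℂ)).symm x)
  rw [show inner ℂ ((WithLp.equiv 2 (m → ℂ)).symm x) ((WithLp.equiv 2 (m → ℂ)).symm x) = star x ⬝ᵥ x from by
    rw [dotProduct_comm]; rfl] at this
  exact this

private lemma opNorm_le_one_iff (A : Matrix n m ℂ) :
    ‖A‖ ≤ 1 ↔ ∀ x : m → ℂ, star (A *ᵥ x) ⬝ᵥ (A *ᵥ x) ≤ star x ⬝ᵥ x := by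
  constructor
  · intro h x
    rw [dot_self_eq, dot_self_eq]
    have h1 := A.l2_opNorm_mulVec ((WithLp.equiv 2 (m → ℂ)).symm x)
    have h2 : ‖(WithLp.equiv 2 (n → ℂ)).symm (A *ᵥ x)‖
        ≤ ‖(WithLp.equiv 2 (m → ℂ)).symm x‖ := by
      refine le_trans h1 ?_
      calc ‖A‖ * ‖(WithLp.equiv 2 (m → ℂ)).symm x‖
          ≤ 1 * ‖(WithLp.equiv 2 (m → ℂ)).symm x‖ := by gcongr
        _ = _ := one_mul _
    have := pow_le_pow_left₀ (norm_nonneg _) h2 2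
    exact_mod_cast this
  · intro h
    rw [l2_opNorm_def]
    refine ContinuousLinearMap.opNorm_le_bound _ zero_le_one fun x => ?_
    rw [one_mul]
    have hx := h ((WithLp.equiv 2 (m → ℂ)) x)
    rw [dot_self_eq, dot_self_eq] at hx
    rw [Equiv.symm_apply_apply] at hx
    have hx' : ‖(WithLp.equiv 2 (n → ℂ)).symm (A *ᵥ (WithLp.equiv 2 (m → ℂ)) x)‖ ^ 2
        ≤ ‖x‖ ^ 2 := by exact_mod_cast hx
    have h3 := (pow_le_pow_iff_left₀ (norm_nonneg _) (norm_nonneg _) two_ne_zero).mp hx'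
    exact le_trans (le_of_eq rfl) h3

private lemma quad_eq (A : Matrix n m ℂ) (x : m → ℂ) :
    star x ⬝ᵥ ((Aᴴ * A) *ᵥ x) = star (A *ᵥ x) ⬝ᵥ (A *ᵥ x) := by
  rw [← mulVec_mulVec, dotProduct_mulVec, star_mulVec]

private lemma psd_sub_iff (A : Matrix n m ℂ) :
    (1 - Aᴴ * A).PosSemidef ↔ ∀ x : m → ℂ, star (A *ᵥ x) ⬝ᵥ (A *ᵥ x) ≤ star x ⬝ᵥ x := by
  have key : ∀ x : m → ℂ,
      star x ⬝ᵥ ((1 - Aᴴ * A) *ᵥ x) = star x ⬝ᵥ x - star (A *ᵥ x) ⬝ᵥ (A *ᵥ x) := by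
    intro x
    rw [sub_mulVec, dotProduct_sub, one_mulVec, quad_eq]
  constructor
  · intro h x
    have := h.dotProduct_mulVec_nonneg x
    rw [key] at this
    exact sub_nonneg.mp this
  · intro h
    refine PosSemidef.of_dotProduct_mulVec_nonneg
      (isHermitian_one.sub (isHermitian_conjTranspose_mul_self A)) fun x => ?_
    rw [key]
    exact sub_nonneg.mpr (h x)

private lemma normLeOne_iff_psd (A : Matrix n m ℂ) :
    ‖A‖ ≤ 1 ↔ (1 - A * Aᴴ).PosSemidef := by
  rw [← A.l2_opNorm_conjTranspose, opNorm_le_one_iff, ← psd_sub_iff,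
    conjTranspose_conjTranspose]

private lemma eq_zero_of_neg_psd {B : Matrix n m ℂ}
    (h : (-(Bᴴ * B)).PosSemidef) : B = 0 := by
  have hv : ∀ x : m → ℂ, B *ᵥ x = 0 := by
    intro x
    have h1 := h.dotProduct_mulVec_nonneg x
    rw [neg_mulVec, dotProduct_neg, quad_eq] at h1
    have h2 := dotProduct_star_self_nonneg (B *ᵥ x)
    exact dotProduct_star_self_eq_zero.mp (le_antisymm (neg_nonneg.mp h1) h2)
  ext i j
  have := congrFun (hv (Pi.single j 1)) i
  simpa using this

end norms

section aux
variable {n : ℕ} (U : Matrix (Fin n) (Fin n) ℂ)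

/-- Conjugation of a real diagonal by `U`. -/
noncomputable def cg (f : Fin n → ℝ) : Matrix (Fin n) (Fin n) ℂ :=
  U * diagonal (fun i => (f i : ℂ)) * Uᴴ

lemma cg_mul (hU : Uᴴ * U = 1) (f g : Fin n → ℝ) :
    cg U f * cg U g = cg U (f * g) := by
  unfold cg
  have e1 : U * diagonal (fun i => (f i : ℂ)) * Uᴴ * (U * diagonal (fun i => (g i : ℂ)) * Uᴴ)
      = U * diagonal (fun i => (f i : ℂ)) * (Uᴴ * U) * (diagonal (fun i => (g i : ℂ)) * Uᴴ) := by
    simp only [Matrix.mul_assoc]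
  rw [e1, hU, mul_one, Matrix.mul_assoc, ← Matrix.mul_assoc (diagonal _), diagonal_mul_diagonal,
    ← Matrix.mul_assoc]
  congr 2
  funext i
  simp [Pi.mul_apply]

lemma cg_herm (f : Fin n → ℝ) : (cg U f)ᴴ = cg U f := by
  unfold cg
  rw [conjTranspose_mul, conjTranspose_mul, conjTranspose_conjTranspose, diagonal_conjTranspose]
  rw [← Matrix.mul_assoc]
  congr 2
  ext i j
  simp only [diagonal_apply, Pi.star_apply]
  split <;> simp [Complex.conj_ofReal]

lemma cg_psd (f : Fin n → ℝ) (hf : ∀ i, 0 ≤ f i) : (cg U f).PosSemidef := by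
  have hd : (diagonal (fun i => (f i : ℂ))).PosSemidef :=
    PosSemidef.diagonal fun i => Complex.zero_le_real.mpr (hf i)
  simpa [cg] using hd.mul_mul_conjTranspose_same U

lemma cg_one (hU' : U * Uᴴ = 1) : cg U 1 = 1 := by
  unfold cg
  have : (diagonal (fun i => (((1:Fin n → ℝ) i) : ℂ))) = 1 := by simp [diagonal_one]
  rw [this, mul_one, hU']

lemma cg_add (f g : Fin n → ℝ) : cg U f + cg U g = cg U (f + g) := by
  unfold cg
  rw [← add_mul, ← mul_add, diagonal_add]
  congr 2
  funext i
  simp [Pi.add_apply]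

lemma cg_zero : cg U 0 = 0 := by
  unfold cg; simp

end aux

/-- The unique positive semidefinite square root of a matrix, extended by `0` to matrices that
are not positive semidefinite. -/
noncomputable def psdSqrt {m : ℕ} (A : Matrix (Fin m) (Fin m) ℂ) : Matrix (Fin m) (Fin m) ℂ :=
  letI := Classical.dec A.PosSemidef
  if h : A.PosSemidef then
    (h.1.eigenvectorUnitary : Matrix (Fin m) (Fin m) ℂ) *
      Matrix.diagonal (fun i => ((Real.sqrt (h.1.eigenvalues i) : ℝ) : ℂ)) *
      (star h.1.eigenvectorUnitary : Matrix (Fin m) (Fin m) ℂ)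
  else 0

lemma psdSqrt_cg {m : ℕ} {A : Matrix (Fin m) (Fin m) ℂ} (hA : A.PosSemidef) :
    psdSqrt A = cg (hA.1.eigenvectorUnitary : Matrix (Fin m) (Fin m) ℂ)
      (fun i => Real.sqrt (hA.1.eigenvalues i)) := by
  rw [psdSqrt, dif_pos hA]
  rfl

/-- The square root of a positive semidefinite matrix (as `psdSqrt`). -/
noncomputable def Matrix.PosSemidef.sqrt {m : ℕ} {A : Matrix (Fin m) (Fin m) ℂ}
    (_h : A.PosSemidef) : Matrix (Fin m) (Fin m) ℂ :=
  psdSqrt A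

lemma Matrix.PosSemidef.posSemidef_sqrt {m : ℕ} {A : Matrix (Fin m) (Fin m) ℂ}
    (h : A.PosSemidef) : h.sqrt.PosSemidef := by
  rw [Matrix.PosSemidef.sqrt, psdSqrt_cg h]
  exact cg_psd _ _ fun i => Real.sqrt_nonneg _

lemma Matrix.PosSemidef.sqrt_mul_self {m : ℕ} {A : Matrix (Fin m) (Fin m) ℂ}
    (h : A.PosSemidef) : h.sqrt * h.sqrt = A := by
  have hsUU : (h.1.eigenvectorUnitary : Matrix (Fin m) (Fin m) ℂ)ᴴ *
      (h.1.eigenvectorUnitary : Matrix (Fin m) (Fin m) ℂ) = 1 := by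
    have := mem_unitaryGroup_iff'.mp h.1.eigenvectorUnitary.2
    simpa [Matrix.star_eq_conjTranspose] using this
  rw [Matrix.PosSemidef.sqrt, psdSqrt_cg h, cg_mul _ hsUU]
  have e : (fun i => Real.sqrt (h.1.eigenvalues i)) * (fun i => Real.sqrt (h.1.eigenvalues i))
      = h.1.eigenvalues := funext fun i => Real.mul_self_sqrt (h.eigenvalues_nonneg i)
  rw [e]
  conv_rhs => rw [h.1.spectral_theorem]
  rfl

lemma psdSqrt_eq {m : ℕ} {A : Matrix (Fin m) (Fin m) ℂ} (hA : A.PosSemidef) :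
    psdSqrt A = hA.sqrt := by
  rfl

/-- **Structure of a row contraction with two blocks.** The row block matrix `T = [T₁ T₂]` has
operator norm at most 1 if and only if there exist contractions `Γ₁`, `Γ₂` with `T₁ = Γ₁` and
`T₂ = D_{Γ₁ᴴ}·Γ₂`, where `D_{Γ₁ᴴ} = (I − Γ₁Γ₁ᴴ)^{1/2}`. -/
theorem rowContraction_iff_exists_contractions
    {n m₁ m₂ : ℕ} (T₁ : Matrix (Fin n) (Fin m₁) ℂ) (T₂ : Matrix (Fin n) (Fin m₂) ℂ) :
    ‖Matrix.fromCols T₁ T₂‖ ≤ 1 ↔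
      ∃ (Γ₁ : Matrix (Fin n) (Fin m₁) ℂ) (Γ₂ : Matrix (Fin n) (Fin m₂) ℂ),
        ‖Γ₁‖ ≤ 1 ∧ ‖Γ₂‖ ≤ 1 ∧ T₁ = Γ₁ ∧ T₂ = psdSqrt (1 - Γ₁ * Γ₁ᴴ) * Γ₂ := by
  constructor
  · intro h
    have hTT : fromCols T₁ T₂ * (fromCols T₁ T₂)ᴴ = T₁ * T₁ᴴ + T₂ * T₂ᴴ := by
      rw [conjTranspose_fromCols_eq_fromRows_conjTranspose, fromCols_mul_fromRows]
    have hK : (1 - T₁ * T₁ᴴ - T₂ * T₂ᴴ).PosSemidef := by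
      rw [sub_sub, ← hTT]
      exact (normLeOne_iff_psd _).mp h
    have hP : (1 - T₁ * T₁ᴴ).PosSemidef := by
      have := hK.add (posSemidef_self_mul_conjTranspose T₂)
      simpa using this
    set D := hP.sqrt with hDdef
    have hD : D.PosSemidef := hP.posSemidef_sqrt
    set U : Matrix (Fin n) (Fin n) ℂ := (hD.1.eigenvectorUnitary : Matrix (Fin n) (Fin n) ℂ) with hUdef
    set μ : Fin n → ℝ := hD.1.eigenvalues with hμdef
    have hUU : U * Uᴴ = 1 := by
      have := mem_unitaryGroup_iff.mp hD.1.eigenvectorUnitary.2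
      simpa [Matrix.star_eq_conjTranspose] using this
    have hsUU : Uᴴ * U = 1 := by
      have := mem_unitaryGroup_iff'.mp hD.1.eigenvectorUnitary.2
      simpa [Matrix.star_eq_conjTranspose] using this
    have hD_eq : D = cg U μ := by
      have := hD.1.spectral_theorem
      rw [this]
      rfl
    set ρ : Fin n → ℝ := fun i => (μ i)⁻¹ with hρdef
    set χ : Fin n → ℝ := fun i => μ i * (μ i)⁻¹ with hχdef
    have hχ01 : ∀ i, χ i = 0 ∨ χ i = 1 := by
      intro i
      by_cases hi : μ i = 0
      · left; simp [hχdef, hi]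
      · right; simp [hχdef, hi]
    -- algebraic facts about the symbols
    have hμρ : (μ * ρ) = χ := rfl
    have hρμ : (ρ * μ) = χ := by funext i; simp [hρdef, hχdef, mul_comm]
    have hχμ : (fun i => 1 - χ i) * μ = 0 := by
      funext i
      by_cases hi : μ i = 0 <;> simp [hχdef, hi]
    have hμχ : μ * (fun i => 1 - χ i) = 0 := by
      funext i
      by_cases hi : μ i = 0 <;> simp [hχdef, hi]
    have hχχ : χ * χ = χ := by
      funext i
      rcases hχ01 i with h | h <;> simp [Pi.mul_apply, h]
    set E := cg U ρ with hEdef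
    set Q := cg U χ with hQdef
    set R := cg U (fun i => 1 - χ i) with hRdef
    have hRQ : R + Q = 1 := by
      rw [hRdef, hQdef, cg_add]
      have : (fun i => 1 - χ i) + χ = 1 := by funext i; simp
      rw [this, cg_one U hUU]
    have hR1Q : R = 1 - Q := by rw [← hRQ]; abel
    -- R * D = 0 and D * R = 0
    have hRD : R * D = 0 := by
      rw [hD_eq, hRdef, cg_mul U hsUU, hχμ, cg_zero]
    have hDR : D * R = 0 := by
      rw [hD_eq, hRdef, cg_mul U hsUU, hμχ, cg_zero]
    have hX : ((1 - T₁ * T₁ᴴ) - T₂ * T₂ᴴ).PosSemidef := hK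
    have hDD : D * D = 1 - T₁ * T₁ᴴ := hP.sqrt_mul_self
    -- R * X * R = -(B^H B) with B = T₂ᴴ * R
    have hRXR : (Rᴴ * ((1 - T₁ * T₁ᴴ) - T₂ * T₂ᴴ) * R).PosSemidef :=
      hX.conjTranspose_mul_mul_same R
    have hRherm : Rᴴ = R := cg_herm U _
    have hS_eq : Rᴴ * ((1 - T₁ * T₁ᴴ) - T₂ * T₂ᴴ) * R = -((T₂ᴴ * R)ᴴ * (T₂ᴴ * R)) := by
      rw [hRherm, ← hDD]
      rw [conjTranspose_mul, conjTranspose_conjTranspose, hRherm]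
      have : R * (D * D - T₂ * T₂ᴴ) * R = (R * D) * (D * R) - (R * T₂) * (T₂ᴴ * R) := by
        simp only [Matrix.mul_sub, Matrix.sub_mul, Matrix.mul_assoc]
      rw [this, hRD, hDR]
      simp [Matrix.mul_assoc]
    have hB0 : T₂ᴴ * R = 0 := eq_zero_of_neg_psd (hS_eq ▸ hRXR)
    have hRT2 : R * T₂ = 0 := by
      have := congrArg conjTranspose hB0
      simpa [conjTranspose_mul, hRherm] using this
    have hQT2 : Q * T₂ = T₂ := by
      have h0 : (1 - Q) * T₂ = 0 := by rw [← hR1Q]; exact hRT2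
      rw [Matrix.sub_mul, Matrix.one_mul, sub_eq_zero] at h0
      exact h0.symm
    -- D * (E * T₂) = T₂
    have hDE : D * E = Q := by rw [hD_eq, hEdef, cg_mul U hsUU, hμρ]
    have hED : E * D = Q := by rw [hD_eq, hEdef, cg_mul U hsUU, hρμ]
    have hDΓ : D * (E * T₂) = T₂ := by rw [← Matrix.mul_assoc, hDE, hQT2]
    -- norm of Γ₂
    have hEherm : Eᴴ = E := cg_herm U _
    have hEXE : (Eᴴ * ((1 - T₁ * T₁ᴴ) - T₂ * T₂ᴴ) * E).PosSemidef :=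
      hX.conjTranspose_mul_mul_same E
    have hQQ : Q * Q = Q := by rw [hQdef, cg_mul U hsUU, hχχ]
    have hEXE_eq : Eᴴ * ((1 - T₁ * T₁ᴴ) - T₂ * T₂ᴴ) * E
        = Q - (E * T₂) * (E * T₂)ᴴ := by
      rw [hEherm, ← hDD]
      have : E * (D * D - T₂ * T₂ᴴ) * E = (E * D) * (D * E) - (E * T₂) * (T₂ᴴ * E) := by
        simp only [Matrix.mul_sub, Matrix.sub_mul, Matrix.mul_assoc]
      rw [this, hED, hDE, hQQ, conjTranspose_mul, hEherm, Matrix.mul_assoc]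
    have hΓ₂psd : (1 - (E * T₂) * (E * T₂)ᴴ).PosSemidef := by
      have hRpsd : R.PosSemidef := by
        refine cg_psd U _ fun i => ?_
        rcases hχ01 i with h | h <;> simp [h]
      have := hRpsd.add (hEXE_eq ▸ hEXE)
      have e : R + (Q - (E * T₂) * (E * T₂)ᴴ) = 1 - (E * T₂) * (E * T₂)ᴴ := by
        rw [hR1Q]; abel
      rwa [e] at this
    refine ⟨T₁, E * T₂, (normLeOne_iff_psd T₁).mpr hP, (normLeOne_iff_psd _).mpr hΓ₂psd,
      rfl, ?_⟩
    rw [psdSqrt_eq hP, ← hDdef, hDΓ]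
  · rintro ⟨Γ₁, Γ₂, h1, h2, rfl, rfl⟩
    have hP : (1 - T₁ * T₁ᴴ).PosSemidef := (normLeOne_iff_psd T₁).mp h1
    have hM : (1 - Γ₂ * Γ₂ᴴ).PosSemidef := (normLeOne_iff_psd Γ₂).mp h2
    rw [psdSqrt_eq hP]
    apply (normLeOne_iff_psd _).mpr
    rw [conjTranspose_fromCols_eq_fromRows_conjTranspose, fromCols_mul_fromRows]
    have key : 1 - (T₁ * T₁ᴴ + (hP.sqrt * Γ₂) * (hP.sqrt * Γ₂)ᴴ)
        = hP.sqrtᴴ * (1 - Γ₂ * Γ₂ᴴ) * hP.sqrt := by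
      rw [hP.posSemidef_sqrt.1]
      rw [conjTranspose_mul, hP.posSemidef_sqrt.1]
      have : hP.sqrt * (1 - Γ₂ * Γ₂ᴴ) * hP.sqrt
          = hP.sqrt * hP.sqrt - hP.sqrt * (Γ₂ * (Γ₂ᴴ * hP.sqrt)) := by
        simp only [Matrix.mul_sub, Matrix.sub_mul, Matrix.mul_one, Matrix.mul_assoc]
      rw [this, hP.sqrt_mul_self]
      simp only [Matrix.mul_assoc]
      abel
    rw [key]
    exact hM.conjTranspose_mul_mul_same hP.sqrt
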